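/- For the staggered averaging scheme u^{n+1}_j = (u^n_{j−1} + 2u^n_j + u^n_{j+1})/4 with initial data u^0_j = 1 for 0 ≤ j < N and u^0_j = 0 otherwise, for each fixed j the value u^n_j converges to 0 as n → ∞. -/
import Mathlib

open Finset Filter

def wker (n : ℕ) (j : ℤ) : ℕ :=
  if 0 ≤ (n:ℤ) + j then (2*n).choose ((n:ℤ) + j).toNat else 0

lemma wker_zero (m : ℤ) : wker 0 m = if m = 0 then 1 else 0 := by
  unfold wker
  split_ifs with h1 h2 h2
  · simp [h2]
  · have hk : 1 ≤ (((0:ℕ):ℤ) + m).toNat := by omega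
    obtain ⟨k, hk⟩ := Nat.exists_eq_add_of_le hk
    rw [hk, Nat.add_comm]
    exact Nat.choose_zero_succ k
  · omega
  · rfl

lemma choose_pascal2 (n l : ℕ) :
    (2*n+2).choose (l+2) = (2*n).choose l + 2*(2*n).choose (l+1) + (2*n).choose (l+2) := by
  have h1 : (2*n+2).choose (l+2) = (2*n+1).choose (l+1) + (2*n+1).choose (l+2) :=
    Nat.choose_succ_succ' (2*n+1) (l+1) ▸ rfl
  have h2 : (2*n+1).choose (l+1) = (2*n).choose l + (2*n).choose (l+1) :=
    Nat.choose_succ_succ' (2*n) l ▸ rfl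
  have h3 : (2*n+1).choose (l+2) = (2*n).choose (l+1) + (2*n).choose (l+2) :=
    Nat.choose_succ_succ' (2*n) (l+1) ▸ rfl
  omega

lemma wker_rec (n : ℕ) (j : ℤ) :
    wker (n+1) j = wker n (j-1) + 2 * wker n j + wker n (j+1) := by
  unfold wker
  rcases lt_trichotomy ((n:ℤ) + j) (-1) with h | h | h
  · have h1 : ¬ (0 ≤ ((n:ℕ)+1:ℕ) + j) := by push_cast; omega
    have h2 : ¬ (0 ≤ (n:ℤ) + (j-1)) := by omega
    have h3 : ¬ (0 ≤ (n:ℤ) + j) := by omega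
    have h4 : ¬ (0 ≤ (n:ℤ) + (j+1)) := by omega
    rw [if_neg h1, if_neg h2, if_neg h3, if_neg h4]
  · have h1 : (0 ≤ ((n:ℕ)+1:ℕ) + j) := by push_cast; omega
    have h2 : ¬ (0 ≤ (n:ℤ) + (j-1)) := by omega
    have h3 : ¬ (0 ≤ (n:ℤ) + j) := by omega
    have h4 : (0 ≤ (n:ℤ) + (j+1)) := by omega
    rw [if_pos h1, if_neg h2, if_neg h3, if_pos h4]
    have e1 : (((n:ℕ)+1:ℕ) + j).toNat = 0 := by push_cast; omega
    have e2 : ((n:ℤ) + (j+1)).toNat = 0 := by omega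
    rw [e1, e2]
    simp
  · have h1 : (0 ≤ ((n:ℕ)+1:ℕ) + j) := by push_cast; omega
    have h3 : (0 ≤ (n:ℤ) + j) := by omega
    have h4 : (0 ≤ (n:ℤ) + (j+1)) := by omega
    rw [if_pos h1, if_pos h3, if_pos h4]
    obtain ⟨k, hkj⟩ : ∃ k:ℕ, (n:ℤ)+j = k := ⟨((n:ℤ)+j).toNat, by omega⟩
    have e1 : (((n:ℕ)+1:ℕ) + j).toNat = k + 1 := by omega
    have ek : ((n:ℤ) + j).toNat = k := by omega
    have e4 : ((n:ℤ) + (j+1)).toNat = k + 1 := by omega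
    rw [e1, ek, e4]
    rcases Nat.eq_zero_or_pos k with hk0 | hk0
    · have h2 : ¬ (0 ≤ (n:ℤ) + (j-1)) := by omega
      rw [if_neg h2, hk0]
      have : (2*(n+1)) = 2*n+2 := by ring
      rw [this]
      simp [Nat.choose_succ_succ]
      omega
    · have h2 : (0 ≤ (n:ℤ) + (j-1)) := by omega
      rw [if_pos h2]
      have e2 : ((n:ℤ) + (j-1)).toNat = k - 1 := by omega
      rw [e2]
      obtain ⟨l, hl⟩ : ∃ l, k = l + 1 := ⟨k - 1, by omega⟩
      subst hl
      have : (2*(n+1)) = 2*n+2 := by ring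
      rw [this]
      simpa using choose_pascal2 n l

lemma wker_le (n : ℕ) (j : ℤ) : wker n j ≤ Nat.centralBinom n := by
  unfold wker
  split_ifs
  · exact Nat.choose_le_centralBinom _ n
  · exact Nat.zero_le _

lemma cb_sq_bound (n : ℕ) : (Nat.centralBinom n)^2 * (2*n+1) ≤ 16^n := by
  induction n with
  | zero => simp [Nat.centralBinom]
  | succ n ih =>
    have key := Nat.succ_mul_centralBinom_succ n
    have hsq : ((n+1) * Nat.centralBinom (n+1))^2 = (2*(2*n+1)*Nat.centralBinom n)^2 := by
      rw [key]
    have h2 : 4*(2*n+1)*(2*n+3) ≤ 16*(n+1)^2 := by nlinarith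
    have h3 : (n+1)^2 * ((Nat.centralBinom (n+1))^2 * (2*(n+1)+1))
        ≤ (n+1)^2 * 16^(n+1) := by
      calc (n+1)^2 * ((Nat.centralBinom (n+1))^2 * (2*(n+1)+1))
          = 4*(2*n+1)^2*(Nat.centralBinom n)^2 * (2*n+3) := by nlinarith [hsq]
        _ = (4*(2*n+1)*(2*n+3)) * ((Nat.centralBinom n)^2 * (2*n+1)) := by ring
        _ ≤ (16*(n+1)^2) * ((Nat.centralBinom n)^2 * (2*n+1)) :=
            Nat.mul_le_mul_right _ h2
        _ ≤ (16*(n+1)^2) * 16^n := Nat.mul_le_mul_left _ ih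
        _ = (n+1)^2 * 16^(n+1) := by ring
    exact Nat.le_of_mul_le_mul_left h3 (by positivity)

lemma cb_real_bound (n : ℕ) :
    (Nat.centralBinom n : ℝ) / 4^n ≤ 1 / Real.sqrt (2*n+1) := by
  have h16 : ((4:ℝ)^n)^2 = 16^n := by
    rw [← pow_mul, mul_comm, pow_mul]; norm_num
  have hb : (Nat.centralBinom n : ℝ)^2 * (2*n+1) ≤ ((4:ℝ)^n)^2 := by
    rw [h16]; exact_mod_cast cb_sq_bound n
  have h4pos : (0:ℝ) < 4^n := by positivity
  have hspos : (0:ℝ) < Real.sqrt (2*n+1) := Real.sqrt_pos.mpr (by positivity)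
  rw [div_le_div_iff₀ h4pos hspos]
  have hsq : ((Nat.centralBinom n : ℝ) * Real.sqrt (2*n+1))^2 ≤ ((4:ℝ)^n)^2 := by
    rw [mul_pow, Real.sq_sqrt (by positivity : (0:ℝ) ≤ 2*(n:ℝ)+1)]
    exact hb
  nlinarith [hsq, mul_nonneg (Nat.cast_nonneg (Nat.centralBinom n) : (0:ℝ) ≤ _) hspos.le]

lemma u_formula (N : ℕ) (u : ℕ → ℤ → ℝ)
    (h0 : ∀ j : ℤ, u 0 j = if 0 ≤ j ∧ j < (N : ℤ) then 1 else 0)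
    (hrec : ∀ n j, u (n+1) j = (u n (j-1) + 2 * u n j + u n (j+1)) / 4) :
    ∀ n j, u n j = (∑ i ∈ Finset.range N, (wker n (j - i) : ℝ)) / 4 ^ n := by
  intro n
  induction n with
  | zero =>
    intro j
    rw [h0]
    simp only [pow_zero, div_one, wker_zero]
    by_cases hj : 0 ≤ j ∧ j < (N:ℤ)
    · rw [if_pos hj, Finset.sum_eq_single j.toNat]
      · rw [if_pos (by omega)]; norm_num
      · intro i hi hne
        have hne' : ¬ (j - (i:ℤ) = 0) := by
          simp only [Finset.mem_range] at hi; omega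
        rw [if_neg hne']; norm_num
      · intro hmem
        simp only [Finset.mem_range, not_lt] at hmem; omega
    · rw [if_neg hj]
      symm
      apply Finset.sum_eq_zero
      intro i hi
      simp only [Finset.mem_range] at hi
      rw [if_neg (by omega)]
      norm_num
  | succ n ih =>
    intro j
    rw [hrec, ih, ih, ih]
    have hsum : (∑ i ∈ Finset.range N, (wker (n+1) (j - i) : ℝ))
        = (∑ i ∈ Finset.range N, (wker n ((j-1) - i) : ℝ))
          + 2 * (∑ i ∈ Finset.range N, (wker n (j - i) : ℝ))
          + (∑ i ∈ Finset.range N, (wker n ((j+1) - i) : ℝ)) := by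
      rw [Finset.mul_sum, ← Finset.sum_add_distrib, ← Finset.sum_add_distrib]
      apply Finset.sum_congr rfl
      intro i _
      rw [show (j-1) - (i:ℤ) = (j - i) - 1 by ring,
          show (j+1) - (i:ℤ) = (j - i) + 1 by ring,
          wker_rec n (j - i)]
      push_cast; ring
    rw [hsum, pow_succ]
    have h4 : ((4:ℝ)^n) ≠ 0 := by positivity
    field_simp

theorem stmt10 (N : ℕ) (u : ℕ → ℤ → ℝ)
    (h0 : ∀ j : ℤ, u 0 j = if 0 ≤ j ∧ j < (N : ℤ) then 1 else 0)
    (hrec : ∀ n j, u (n+1) j = (u n (j-1) + 2 * u n j + u n (j+1)) / 4) :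
    ∀ j : ℤ, Filter.Tendsto (fun n => u n j) Filter.atTop (nhds 0) := by
  intro j
  have hform := u_formula N u h0 hrec
  have h0le : ∀ n, 0 ≤ u n j := by
    intro n
    rw [hform]
    apply div_nonneg _ (by positivity)
    exact Finset.sum_nonneg fun i _ => by positivity
  have hle : ∀ n, u n j ≤ (N:ℝ) * (1 / Real.sqrt (2*n+1)) := by
    intro n
    rw [hform]
    have hb : (∑ i ∈ Finset.range N, (wker n (j - i) : ℝ)) ≤ (N:ℝ) * Nat.centralBinom n := by
      calc (∑ i ∈ Finset.range N, (wker n (j - i) : ℝ))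
          ≤ ∑ _i ∈ Finset.range N, (Nat.centralBinom n : ℝ) :=
            Finset.sum_le_sum (fun i _ => by exact_mod_cast wker_le n (j - i))
        _ = (N:ℝ) * Nat.centralBinom n := by
            rw [Finset.sum_const, Finset.card_range]; push_cast; ring
    calc (∑ i ∈ Finset.range N, (wker n (j - i) : ℝ)) / 4 ^ n
        ≤ ((N:ℝ) * Nat.centralBinom n) / 4 ^ n := by
          apply div_le_div_of_nonneg_right hb (by positivity) |>.trans_eq rfl
      _ = (N:ℝ) * ((Nat.centralBinom n : ℝ) / 4 ^ n) := by ring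
      _ ≤ (N:ℝ) * (1 / Real.sqrt (2*n+1)) :=
          mul_le_mul_of_nonneg_left (cb_real_bound n) (Nat.cast_nonneg N)
  apply squeeze_zero h0le hle
  have hsqrt : Filter.Tendsto (fun n:ℕ => Real.sqrt (2*n+1)) Filter.atTop Filter.atTop := by
    apply Filter.tendsto_atTop_atTop.2
    intro b
    refine ⟨⌈b^2⌉₊, fun n hn => ?_⟩
    rcases le_or_gt b 0 with hb | hb
    · exact hb.trans (Real.sqrt_nonneg _)
    · rw [show b = Real.sqrt (b^2) from (Real.sqrt_sq hb.le).symm]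
      apply Real.sqrt_le_sqrt
      have h1 := Nat.le_ceil (b^2)
      have hn' : (⌈b^2⌉₊:ℝ) ≤ n := Nat.cast_le.mpr hn
      nlinarith [Nat.cast_nonneg (α := ℝ) n]
  have hinv : Filter.Tendsto (fun n:ℕ => 1 / Real.sqrt (2*n+1)) Filter.atTop (nhds 0) := by
    simp only [one_div]
    exact tendsto_inv_atTop_zero.comp hsqrt
  have := hinv.const_mul (N:ℝ)
  simpa using this
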